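/- Cascades of pebble moves terminate and strictly decrease the energy: in a well-ordered configuration, whenever the destination of a pebble move of a label i is an occupied site, the pebble index of that site exceeds i. Consequently, in any cascade of pebble moves — a sequence of pebble moves in which each subsequent move moves the pebble index of the previous move's destination site — the moved labels are strictly increasing, so the cascade has length at most n; and if at every step of the cascade the moved label has a destination, then the final move of the cascade has as destination a hole or a site outside the cluster S, so the cascade strictly decreases the energy (by at least 1). -/

import Mathlib

namespace IDLA

variable {n : ℕ} {α : Type*} [DecidableEq α] {ℓ : Fin n → ℕ}

/-- The cluster: the union of the live segments `r i t`, `t ≤ τ i`, of the `n` paths. -/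
def cluster (r : ∀ i, Fin (ℓ i) → α) (τ : ∀ i, Fin (ℓ i)) : Finset α :=
  Finset.univ.biUnion fun i => (Finset.univ.filter fun t => t ≤ τ i).image (r i)

/-- `mult r τ z` is the number of labels at `z`, i.e. the number of paths whose
sticking point `s i = r i (τ i)` equals `z`. -/
def mult (r : ∀ i, Fin (ℓ i) → α) (τ : ∀ i, Fin (ℓ i)) (z : α) : ℕ :=
  (Finset.univ.filter fun i => r i (τ i) = z).card

/-- The energy `E = ∑_{z ∈ S} |m(z) − 1|` of a configuration. -/
def energy (r : ∀ i, Fin (ℓ i) → α) (τ : ∀ i, Fin (ℓ i)) : ℕ :=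
  ∑ z ∈ cluster r τ, ((mult r τ z : ℤ) - 1).natAbs

/-- A configuration is well-ordered if for all `i, j` and all `t < τ i`,
`r i t = s j` implies `j < i`. -/
def WellOrdered (r : ∀ i, Fin (ℓ i) → α) (τ : ∀ i, Fin (ℓ i)) : Prop :=
  ∀ (i j : Fin n) (t : Fin (ℓ i)), t < τ i → r i t = r j (τ j) → j < i

/-- `z` is a possible destination for the label `i`: it is either (1) not in the
cluster `S`, or (2) an occupied site whose pebble index (the largest label sticking
there) exceeds `i`, or (3) a hole (a cluster site with no label) whose hole index (the
smallest label live there) exceeds `i`. -/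
def IsDest (r : ∀ i, Fin (ℓ i) → α) (τ : ∀ i, Fin (ℓ i)) (i : Fin n) (z : α) : Prop :=
  z ∉ cluster r τ ∨
  (∃ j, i < j ∧ r j (τ j) = z) ∨
  (mult r τ z = 0 ∧ z ∈ cluster r τ ∧
    ∀ j, (∃ t : Fin (ℓ j), t ≤ τ j ∧ r j t = z) → i < j)

/-- `i` is the pebble index of the site `z`: `i` sticks at `z` and is the largest label
doing so. -/
def IsPebbleIndex (r : ∀ i, Fin (ℓ i) → α) (τ : ∀ i, Fin (ℓ i)) (i : Fin n) (z : α) :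
    Prop :=
  r i (τ i) = z ∧ ∀ j, r j (τ j) = z → j ≤ i

/-- A pebble move of the label `i`, turning the configuration `τ` into `τ'`: the site
`r i (τ i)` is multiply occupied with pebble index `i`, and `τ'` is obtained from `τ` by
moving `τ i` to the first time `t' > τ i` at which the path of `i` is at a destination. -/
def PebbleMove (r : ∀ i, Fin (ℓ i) → α) (τ : ∀ i, Fin (ℓ i)) (i : Fin n)
    (τ' : ∀ i, Fin (ℓ i)) : Prop :=
  2 ≤ mult r τ (r i (τ i)) ∧
  IsPebbleIndex r τ i (r i (τ i)) ∧
  ∃ t' : Fin (ℓ i), τ i < t' ∧ IsDest r τ i (r i t') ∧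
    (∀ t : Fin (ℓ i), τ i < t → t < t' → ¬ IsDest r τ i (r i t)) ∧
    τ' = Function.update τ i t'

section Helpers


lemma mem_cluster {r : ∀ i, Fin (ℓ i) → α} {τ : ∀ i, Fin (ℓ i)} {j : Fin n}
    {t : Fin (ℓ j)} (h : t ≤ τ j) : r j t ∈ cluster r τ := by
  simp only [cluster, Finset.mem_biUnion, Finset.mem_image, Finset.mem_filter,
    Finset.mem_univ, true_and]
  exact ⟨j, t, h, rfl⟩

lemma mult_pos_iff {r : ∀ i, Fin (ℓ i) → α} {τ : ∀ i, Fin (ℓ i)} {z : α} :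
    1 ≤ mult r τ z ↔ ∃ j, r j (τ j) = z := by
  unfold mult
  constructor
  · intro h
    obtain ⟨j, hj⟩ := Finset.card_pos.mp h
    exact ⟨j, (Finset.mem_filter.mp hj).2⟩
  · rintro ⟨j, hj⟩
    exact Finset.card_pos.mpr ⟨j, Finset.mem_filter.mpr ⟨Finset.mem_univ j, hj⟩⟩

lemma mult_update (r : ∀ i, Fin (ℓ i) → α) (τ : ∀ i, Fin (ℓ i)) (i : Fin n)
    (t' : Fin (ℓ i)) (w : α) :
    mult r (Function.update τ i t') w + (if r i (τ i) = w then 1 else 0)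
      = mult r τ w + (if r i t' = w then 1 else 0) := by
  unfold mult
  rw [Finset.card_filter, Finset.card_filter,
    ← Finset.sum_erase_add _ _ (Finset.mem_univ i),
    ← Finset.sum_erase_add _ _ (Finset.mem_univ i)]
  have hcongr : ∀ j ∈ Finset.univ.erase i,
      (if r j (Function.update τ i t' j) = w then (1:ℕ) else 0)
        = (if r j (τ j) = w then 1 else 0) := by
    intro j hj
    rw [Function.update_of_ne (Finset.ne_of_mem_erase hj)]
  rw [Finset.sum_congr rfl hcongr, Function.update_self]
  split_ifs <;> omega

lemma cluster_update {r : ∀ i, Fin (ℓ i) → α} {τ : ∀ i, Fin (ℓ i)} {i : Fin n}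
    {t' : Fin (ℓ i)} (h : τ i < t')
    (hmid : ∀ t : Fin (ℓ i), τ i < t → t < t' → r i t ∈ cluster r τ) :
    cluster r (Function.update τ i t') = insert (r i t') (cluster r τ) := by
  ext w
  simp only [cluster, Finset.mem_insert, Finset.mem_biUnion, Finset.mem_image,
    Finset.mem_filter, Finset.mem_univ, true_and]
  constructor
  · rintro ⟨j, t, ht, rfl⟩
    by_cases hji : j = i
    · subst hji
      rw [Function.update_self] at ht
      rcases lt_or_eq_of_le ht with h1 | h1
      · by_cases h2 : t ≤ τ j
        · exact Or.inr ⟨j, t, h2, rfl⟩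
        · have hm := hmid t (lt_of_not_ge h2) h1
          simp only [cluster, Finset.mem_biUnion, Finset.mem_image, Finset.mem_filter,
            Finset.mem_univ, true_and] at hm
          exact Or.inr hm
      · left; rw [h1]
    · rw [Function.update_of_ne hji] at ht
      exact Or.inr ⟨j, t, ht, rfl⟩
  · rintro (rfl | ⟨j, t, ht, rfl⟩)
    · exact ⟨i, t', by rw [Function.update_self], rfl⟩
    · refine ⟨j, t, ?_, rfl⟩
      by_cases hji : j = i
      · subst hji; rw [Function.update_self]; exact le_trans ht (le_of_lt h)
      · rw [Function.update_of_ne hji]; exact ht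

lemma dest_occupied {r : ∀ i, Fin (ℓ i) → α} {τ : ∀ i, Fin (ℓ i)} {i : Fin n} {z : α}
    (hd : IsDest r τ i z) (hocc : 1 ≤ mult r τ z) :
    ∃ j, i < j ∧ r j (τ j) = z := by
  obtain ⟨j0, hj0⟩ := mult_pos_iff.mp hocc
  rcases hd with h | h | h
  · exact absurd (hj0 ▸ mem_cluster le_rfl) h
  · exact h
  · omega

lemma energy_move {r : ∀ i, Fin (ℓ i) → α} (hr : ∀ i, Function.Injective (r i))
    {τ τ' : ∀ i, Fin (ℓ i)} {i : Fin n} (h : PebbleMove r τ i τ') :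
    energy r τ' ≤ energy r τ ∧
      (mult r τ (r i (τ' i)) = 0 → energy r τ' + 1 ≤ energy r τ) := by
  obtain ⟨hm, hpi, t', hlt, hdest, hmin, rfl⟩ := h
  have hτ'i : Function.update τ i t' i = t' := Function.update_self ..
  rw [hτ'i]
  have hzz0 : r i t' ≠ r i (τ i) := fun hh => (ne_of_gt hlt) (hr i hh)
  have hmid : ∀ t : Fin (ℓ i), τ i < t → t < t' → r i t ∈ cluster r τ := by
    intro t h1 h2
    have hnd := hmin t h1 h2
    unfold IsDest at hnd
    push_neg at hnd
    exact hnd.1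
  have hclu := cluster_update hlt hmid
  have hz0 : mult r (Function.update τ i t') (r i (τ i)) + 1 = mult r τ (r i (τ i)) := by
    have := mult_update r τ i t' (r i (τ i))
    rw [if_pos rfl, if_neg hzz0] at this
    omega
  have hz : mult r (Function.update τ i t') (r i t') = mult r τ (r i t') + 1 := by
    have := mult_update r τ i t' (r i t')
    rw [if_pos rfl, if_neg (Ne.symm hzz0)] at this
    omega
  have hother : ∀ w, w ≠ r i (τ i) → w ≠ r i t' →
      mult r (Function.update τ i t') w = mult r τ w := by
    intro w h1 h2
    have := mult_update r τ i t' w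
    rw [if_neg (fun hh => h1 hh.symm), if_neg (fun hh => h2 hh.symm)] at this
    omega
  have hz0S : r i (τ i) ∈ cluster r τ := mem_cluster le_rfl
  by_cases hzS : r i t' ∈ cluster r τ
  · -- cluster unchanged
    have hins : insert (r i t') (cluster r τ) = cluster r τ := Finset.insert_eq_self.mpr hzS
    have hzE : r i t' ∈ (cluster r τ).erase (r i (τ i)) :=
      Finset.mem_erase.mpr ⟨hzz0, hzS⟩
    have hsplit : ∀ g : α → ℕ, ∑ w ∈ cluster r τ, g w
        = g (r i (τ i)) + (g (r i t') + ∑ w ∈ ((cluster r τ).erase (r i (τ i))).erase (r i t'), g w) := by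
      intro g
      rw [Finset.add_sum_erase _ _ hzE, Finset.add_sum_erase _ _ hz0S]
    have hcongr : ∑ w ∈ ((cluster r τ).erase (r i (τ i))).erase (r i t'),
          ((mult r (Function.update τ i t') w : ℤ) - 1).natAbs
        = ∑ w ∈ ((cluster r τ).erase (r i (τ i))).erase (r i t'),
          ((mult r τ w : ℤ) - 1).natAbs := by
      refine Finset.sum_congr rfl fun w hw => ?_
      obtain ⟨hw1, hw2⟩ := Finset.mem_erase.mp hw
      rw [hother w (Finset.mem_erase.mp hw2).1 hw1]
    unfold energy
    rw [hclu, hins, hsplit, hsplit, hcongr]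
    constructor
    · have h1 := hz0; have h2 := hz; have := hm; omega
    · intro hmz
      have h1 := hz0; have h2 := hz; have := hm; omega
  · -- cluster grows by the new site
    have hmz : mult r τ (r i t') = 0 := by
      by_contra hc
      obtain ⟨j, hj⟩ := mult_pos_iff.mp (show 1 ≤ mult r τ (r i t') by omega)
      exact hzS (hj ▸ mem_cluster le_rfl)
    have hsplit : ∀ g : α → ℕ, ∑ w ∈ cluster r τ, g w
        = g (r i (τ i)) + ∑ w ∈ (cluster r τ).erase (r i (τ i)), g w := by
      intro g
      rw [Finset.add_sum_erase _ _ hz0S]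
    have hcongr : ∑ w ∈ (cluster r τ).erase (r i (τ i)),
          ((mult r (Function.update τ i t') w : ℤ) - 1).natAbs
        = ∑ w ∈ (cluster r τ).erase (r i (τ i)),
          ((mult r τ w : ℤ) - 1).natAbs := by
      refine Finset.sum_congr rfl fun w hw => ?_
      rw [hother w (Finset.mem_erase.mp hw).1 (fun hh => hzS (hh ▸ (Finset.mem_erase.mp hw).2))]
    unfold energy
    rw [hclu, Finset.sum_insert hzS, hsplit, hsplit, hcongr]
    have h1 := hz0; have h2 := hz
    constructor
    · omega
    · intro _; omega


end Helpers

end IDLA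

/-- Cascades of pebble moves terminate and strictly decrease the
energy.  (a) In a well-ordered configuration, whenever the destination of a pebble move
of a label `i` is an occupied site, the pebble index of that site exceeds `i`.
(b) In any cascade of pebble moves — a sequence of pebble moves in which each subsequent
move moves the pebble index of the previous move's destination site — the moved labels
are strictly increasing, so the cascade has length at most `n`.  (c) If at every step of
the cascade the moved label has a destination (here: every pebble index of the last
destination site has a destination, but no further pebble move extends the cascade),
then the final move of the cascade has as destination a hole or a site outside the
cluster `S`, so the cascade strictly decreases the energy, by at least `1`. -/
theorem cascade_of_pebble_moves
    {n : ℕ} {α : Type*} [DecidableEq α] {ℓ : Fin n → ℕ}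
    (r : ∀ i, Fin (ℓ i) → α) (hr : ∀ i, Function.Injective (r i))
    (k : ℕ) (hk : 1 ≤ k)
    (τs : ℕ → ∀ i, Fin (ℓ i)) (lab : ℕ → Fin n)
    (h0 : IDLA.WellOrdered r (τs 0))
    (hstep : ∀ m, m < k → IDLA.PebbleMove r (τs m) (lab m) (τs (m + 1)))
    (hlink : ∀ m, m + 1 < k →
      IDLA.IsPebbleIndex r (τs (m + 1)) (lab (m + 1)) (r (lab m) (τs (m + 1) (lab m)))) :
    -- (a)
    (∀ (τ τ' : ∀ i, Fin (ℓ i)) (i : Fin n), IDLA.WellOrdered r τ →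
      IDLA.PebbleMove r τ i τ' → 1 ≤ IDLA.mult r τ (r i (τ' i)) →
      ∃ j, i < j ∧ r j (τ j) = r i (τ' i)) ∧
    -- (b)
    (∀ m m', m < m' → m' < k → lab m < lab m') ∧ k ≤ n ∧
    -- (c)
    (((∀ i' : Fin n,
        IDLA.IsPebbleIndex r (τs k) i' (r (lab (k - 1)) (τs k (lab (k - 1)))) →
        ∃ t' : Fin (ℓ i'), τs k i' < t' ∧ IDLA.IsDest r (τs k) i' (r i' t')) ∧
      ¬ ∃ (i' : Fin n) (τ' : ∀ i, Fin (ℓ i)),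
        IDLA.IsPebbleIndex r (τs k) i' (r (lab (k - 1)) (τs k (lab (k - 1)))) ∧
        IDLA.PebbleMove r (τs k) i' τ') →
      ((r (lab (k - 1)) (τs k (lab (k - 1))) ∉ IDLA.cluster r (τs (k - 1)) ∨
        (r (lab (k - 1)) (τs k (lab (k - 1))) ∈ IDLA.cluster r (τs (k - 1)) ∧
          IDLA.mult r (τs (k - 1)) (r (lab (k - 1)) (τs k (lab (k - 1)))) = 0)) ∧
        IDLA.energy r (τs k) + 1 ≤ IDLA.energy r (τs 0))) := by
  classical
  -- part (a)
  have parta : ∀ (τ τ' : ∀ i, Fin (ℓ i)) (i : Fin n), IDLA.WellOrdered r τ →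
      IDLA.PebbleMove r τ i τ' → 1 ≤ IDLA.mult r τ (r i (τ' i)) →
      ∃ j, i < j ∧ r j (τ j) = r i (τ' i) := by
    intro τ τ' i _ hpm hocc
    obtain ⟨_, _, t', hlt, hdest, _, rfl⟩ := hpm
    rw [Function.update_self] at hocc ⊢
    exact IDLA.dest_occupied hdest hocc
  -- (b): successor step
  have hsucc : ∀ m, m + 1 < k → lab m < lab (m + 1) := by
    intro m hm1
    obtain ⟨_, _, t', hlt, hdest, hmin, heq⟩ := hstep m (by omega)
    have ht' : τs (m + 1) (lab m) = t' := by rw [heq, Function.update_self]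
    have hz : r (lab (m + 1)) (τs (m + 1) (lab (m + 1))) = r (lab m) t' := by
      rw [(hlink m hm1).1, ht']
    have hm2 : 1 < (Finset.univ.filter
        fun j => r j (τs (m + 1) j) = r (lab m) t').card := by
      have h2 := (hstep (m + 1) hm1).1
      rw [hz] at h2
      exact h2
    obtain ⟨j, hjne, hjz⟩ : ∃ j, j ≠ lab m ∧ r j (τs m j) = r (lab m) t' := by
      obtain ⟨a, ha, b, hb, hab⟩ := Finset.one_lt_card.mp hm2
      have ha' := (Finset.mem_filter.mp ha).2
      have hb' := (Finset.mem_filter.mp hb).2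
      rcases eq_or_ne a (lab m) with h | h
      · have hbne : b ≠ lab m := fun hh => hab (by rw [h, ← hh])
        refine ⟨b, hbne, ?_⟩
        rwa [heq, Function.update_of_ne hbne] at hb'
      · refine ⟨a, h, ?_⟩
        rwa [heq, Function.update_of_ne h] at ha'
    rcases hdest with hc | ⟨j0, hij0, hj0⟩ | hc
    · exact absurd (hjz ▸ IDLA.mem_cluster le_rfl) hc
    · have hj0ne : j0 ≠ lab m := ne_of_gt hij0 -- hij0 : lab m < j0
      have hj0' : r j0 (τs (m + 1) j0) = r (lab m) (τs (m + 1) (lab m)) := by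
        rw [ht', heq, Function.update_of_ne hj0ne]
        exact hj0
      have hle := (hlink m hm1).2 j0 hj0'
      exact lt_of_lt_of_le hij0 hle
    · have h1 : 1 ≤ IDLA.mult r (τs m) (r (lab m) t') :=
        IDLA.mult_pos_iff.mpr ⟨j, hjz⟩
      omega
  -- (b): strict monotonicity
  have hmono : ∀ m m', m < m' → m' < k → lab m < lab m' := by
    intro m m'
    induction m' with
    | zero => omega
    | succ p ih =>
      intro h hk'
      rcases Nat.lt_succ_iff_lt_or_eq.mp h with h' | h'
      · exact lt_trans (ih h' (by omega)) (hsucc p hk')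
      · rw [h']; exact hsucc p hk'
  -- (b): k ≤ n
  have hle : ∀ m, m < k → m ≤ (lab m : ℕ) := by
    intro m
    induction m with
    | zero => intro _; exact Nat.zero_le _
    | succ p ih =>
      intro hm
      have h1 := ih (by omega)
      have h2 := hmono p (p + 1) (by omega) hm
      have h3 : (lab p : ℕ) < (lab (p + 1) : ℕ) := h2
      omega
  have hkn : k ≤ n := by
    have h1 := hle (k - 1) (by omega)
    have h2 := (lab (k - 1)).isLt
    omega
  refine ⟨parta, hmono, hkn, ?_⟩
  -- part (c)
  rintro ⟨hA, hB⟩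
  have hk1 : k - 1 + 1 = k := by omega
  have hpm : IDLA.PebbleMove r (τs (k - 1)) (lab (k - 1)) (τs k) := by
    have := hstep (k - 1) (by omega)
    rwa [hk1] at this
  obtain ⟨hm2, hpi, t', hlt, hdest, hmin, heq⟩ := hpm
  have ht' : τs k (lab (k - 1)) = t' := by rw [heq, Function.update_self]
  -- rule out destination case 2
  have hnot2 : ¬ ∃ j, lab (k - 1) < j ∧ r j (τs (k - 1) j) = r (lab (k - 1)) t' := by
    rintro ⟨j, hij, hj⟩
    have hjne : j ≠ lab (k - 1) := ne_of_gt hij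
    have hjk : r j (τs k j) = r (lab (k - 1)) t' := by
      rw [heq, Function.update_of_ne hjne]; exact hj
    have hik : r (lab (k - 1)) (τs k (lab (k - 1))) = r (lab (k - 1)) t' := by rw [ht']
    have hm2' : 1 < (Finset.univ.filter
        fun j' => r j' (τs k j') = r (lab (k - 1)) t').card :=
      Finset.one_lt_card.mpr ⟨lab (k - 1),
        Finset.mem_filter.mpr ⟨Finset.mem_univ _, hik⟩, j,
        Finset.mem_filter.mpr ⟨Finset.mem_univ _, hjk⟩, hjne.symm⟩
    set F := Finset.univ.filter fun j' => r j' (τs k j') = r (lab (k - 1)) t' with hF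
    have hFne : F.Nonempty := ⟨lab (k - 1), Finset.mem_filter.mpr ⟨Finset.mem_univ _, hik⟩⟩
    set i' := F.max' hFne with hi'
    have hi'stick : r i' (τs k i') = r (lab (k - 1)) t' :=
      (Finset.mem_filter.mp (F.max'_mem hFne)).2
    have hi'pi : IDLA.IsPebbleIndex r (τs k) i' (r (lab (k - 1)) (τs k (lab (k - 1)))) := by
      rw [ht']
      exact ⟨hi'stick, fun j' hj' =>
        F.le_max' j' (Finset.mem_filter.mpr ⟨Finset.mem_univ _, hj'⟩)⟩
    obtain ⟨t'', hlt'', hdest''⟩ := hA i' hi'pi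
    set T := Finset.univ.filter
      (fun t : Fin (ℓ i') => τs k i' < t ∧ IDLA.IsDest r (τs k) i' (r i' t)) with hT
    have hTne : T.Nonempty :=
      ⟨t'', Finset.mem_filter.mpr ⟨Finset.mem_univ _, hlt'', hdest''⟩⟩
    set tm := T.min' hTne with htmdef
    have htm := Finset.mem_filter.mp (T.min'_mem hTne)
    apply hB
    refine ⟨i', Function.update (τs k) i' tm, hi'pi, ?_, ?_, tm, htm.2.1, htm.2.2, ?_, rfl⟩
    · rw [hi'stick]
      have : IDLA.mult r (τs k) (r (lab (k - 1)) t') = F.card := rfl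
      rw [this]; omega
    · rw [hi'stick, ← ht']; exact hi'pi
    · intro t h1 h2 hd
      have htT : t ∈ T := Finset.mem_filter.mpr ⟨Finset.mem_univ _, h1, hd⟩
      exact absurd (T.min'_le t htT) (not_le.mpr h2)
  -- extract the hole / outside-cluster conclusion
  have hmz0 : IDLA.mult r (τs (k - 1)) (r (lab (k - 1)) t') = 0 := by
    rcases hdest with hc | hc | hc
    · by_contra hcc
      obtain ⟨j, hj⟩ := IDLA.mult_pos_iff.mp
        (show 1 ≤ IDLA.mult r (τs (k - 1)) (r (lab (k - 1)) t') by omega)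
      exact hc (hj ▸ IDLA.mem_cluster le_rfl)
    · exact absurd hc hnot2
    · exact hc.1
  constructor
  · rw [ht']
    rcases hdest with hc | hc | hc
    · exact Or.inl hc
    · exact absurd hc hnot2
    · exact Or.inr ⟨hc.2.1, hc.1⟩
  · -- energy
    have hchain : ∀ m, m ≤ k - 1 → IDLA.energy r (τs m) ≤ IDLA.energy r (τs 0) := by
      intro m
      induction m with
      | zero => intro _; exact le_rfl
      | succ p ih =>
        intro hm
        have h1 := (IDLA.energy_move hr (hstep p (by omega))).1
        exact le_trans h1 (ih (by omega))
    have hlast := (IDLA.energy_move hr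
      (⟨hm2, hpi, t', hlt, hdest, hmin, heq⟩ :
        IDLA.PebbleMove r (τs (k - 1)) (lab (k - 1)) (τs k))).2
    rw [ht'] at hlast
    exact le_trans (hlast hmz0) (hchain (k - 1) le_rfl)
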